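/- Let A be a unital C*-algebra, t ∈ [0,1], and α a complex number with |α|² = t(1−t). In the 2×2 matrix algebra M₂(A), let p be the matrix with entries p₁₁ = 1 and all other entries 0, and let q be the matrix with q₁₁ = t·1, q₁₂ = α·1, q₂₁ = α*·1, q₂₂ = (1−t)·1. Then the element q + (1/2)(1−q) − (1/(2−t))p is positive. -/

import Mathlib

open Matrix

/-- A matrix over a C*-algebra is positive iff it is of the form `rᴴ * r`. -/
def MatIsPos {A : Type*} [CStarAlgebra A] (m : Matrix (Fin 2) (Fin 2) A) : Prop :=
  ∃ r : Matrix (Fin 2) (Fin 2) A, m = r.conjTranspose * r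

lemma smul_algMap {A : Type*} [CStarAlgebra A] (r : ℝ) (z : ℂ) :
    r • (algebraMap ℂ A z) = algebraMap ℂ A ((r : ℂ) * z) := by
  rw [_root_.map_mul, ← Algebra.smul_def]
  have h1 : (r : ℂ) = (r : ℝ) • (1 : ℂ) := by norm_num [Complex.real_smul]
  rw [h1, smul_assoc, one_smul]

theorem stmt0 {A : Type*} [CStarAlgebra A] (t : ℝ) (ht0 : 0 ≤ t) (ht1 : t ≤ 1)
    (α : ℂ) (hα : ‖α‖ ^ 2 = t * (1 - t)) :
    MatIsPos
      ((!![algebraMap ℂ A (t : ℂ), algebraMap ℂ A α;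
          algebraMap ℂ A (starRingEnd ℂ α), algebraMap ℂ A ((1 - t : ℝ) : ℂ)] :
            Matrix (Fin 2) (Fin 2) A)
        + (1 / 2 : ℝ) • ((1 : Matrix (Fin 2) (Fin 2) A) -
            !![algebraMap ℂ A (t : ℂ), algebraMap ℂ A α;
              algebraMap ℂ A (starRingEnd ℂ α), algebraMap ℂ A ((1 - t : ℝ) : ℂ)])
        - (1 / (2 - t) : ℝ) • (!![1, 0; 0, 0] : Matrix (Fin 2) (Fin 2) A)) := by
  have h2t : (0:ℝ) < 2 - t := by linarith
  have h2tC : ((2:ℂ) - t) ≠ 0 := by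
    intro h
    have := congrArg Complex.re h
    simp at this
    linarith
  set c : ℝ := Real.sqrt (2 * (2 - t)) with hc
  have hc2 : (c:ℂ) * c = ((2 * (2 - t) : ℝ) : ℂ) := by
    norm_cast
    exact Real.mul_self_sqrt (by positivity)
  have hcne : (c:ℂ) ≠ 0 := by
    norm_cast
    rw [hc]
    positivity
  have hnsq : Complex.normSq α = t * (1 - t) := by
    rw [← hα, Complex.normSq_eq_norm_sq]
  have hαα : α * (starRingEnd ℂ α) = ((t * (1 - t) : ℝ) : ℂ) := by
    rw [Complex.mul_conj, hnsq]
  refine ⟨!![algebraMap ℂ A ((starRingEnd ℂ α) / c), algebraMap ℂ A (((2 - t : ℝ) : ℂ) / c);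
      0, 0], ?_⟩
  ext i j
  fin_cases i <;> fin_cases j <;>
  · simp [Matrix.mul_apply, Fin.sum_univ_two, Matrix.one_apply, ← algebraMap_star_comm]
    simp only [show (1:A) = algebraMap ℂ A 1 from (_root_.map_one _).symm, smul_algMap,
      ← map_sub, ← map_add, ← map_neg, ← _root_.map_mul]
    congr 1
    rw [div_mul_div_comm, hc2]
    try rw [mul_comm (starRingEnd ℂ α) α]
    try rw [hαα]
    push_cast
    field_simp
    ring
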